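/- The language of a skip-free GKAT expression satisfies the inductive characterization: L(0) = ∅; L(p) = {αp : α ∈ At}; L(e₁ +_b e₂) = bL(e₁) ∪ b̄L(e₂); L(e₁·e₂) = L(e₁)·L(e₂); L(e₁^(b)e₂) = ⋃_{n∈ℕ} (bL(e₁))ⁿ · b̄L(e₂). -/

import Mathlib

variable {At : Type} {Act : Type} {X : Type} {Y : Type} {Z : Type}

/-- Skip-free GKAT expressions; tests are represented as Boolean predicates on atoms. -/
inductive GExp (At Act : Type) : Type
  | zero : GExp At Act
  | act : Act → GExp At Act
  | add : (At → Bool) → GExp At Act → GExp At Act → GExp At Act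
  | seq : GExp At Act → GExp At Act → GExp At Act
  | loop : (At → Bool) → GExp At Act → GExp At Act → GExp At Act

/-- The Brzozowski-style small-step semantics (derivative) of skip-free GKAT expressions.
`none` is the failure output ⊥, `some (p, none)` is acceptance with action `p`,
and `some (p, some e')` is a transition to `e'` with action `p`. -/
def gderiv : GExp At Act → At → Option (Act × Option (GExp At Act))
  | .zero, _ => none
  | .act p, _ => some (p, none)
  | .add b e f, α => if b α then gderiv e α else gderiv f α
  | .seq e f, α =>
      match gderiv e α with
      | none => none
      | some (p, none) => some (p, some f)
      | some (p, some e') => some (p, some (.seq e' f))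
  | .loop b e f, α =>
      if b α then
        match gderiv e α with
        | none => none
        | some (p, none) => some (p, some (.loop b e f))
        | some (p, some e') => some (p, some (.seq e' (.loop b e f)))
      else gderiv f α

/-- A skip-free automaton structure on `X`. -/
abbrev SFA (At Act X : Type) := X → At → Option (Act × Option X)

/-- Acceptance of a guarded trace (a nonempty list of atom/action pairs) from a state. -/
inductive Accepts (h : SFA At Act X) : X → List (At × Act) → Prop
  | last {x α p} : h x α = some (p, none) → Accepts h x [(α, p)]
  | step {x α p x' w} : h x α = some (p, some x') → Accepts h x' w →
      Accepts h x ((α, p) :: w)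

/-- The language of guarded traces accepted by a state of a skip-free automaton. -/
def Lang (h : SFA At Act X) (x : X) : Set (List (At × Act)) := {w | Accepts h x w}

/-- Bisimulations between skip-free automata. -/
def IsSFBisim (h : SFA At Act X) (k : SFA At Act Y) (R : X → Y → Prop) : Prop :=
  ∀ ⦃x y⦄, R x y → ∀ α : At,
    (h x α = none ↔ k y α = none) ∧
    (∀ p : Act, h x α = some (p, none) ↔ k y α = some (p, none)) ∧
    (∀ (p : Act) (x' : X), h x α = some (p, some x') →
      ∃ y' : Y, k y α = some (p, some y') ∧ R x' y')

/-- Bisimilarity of states of skip-free automata. -/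
def SFBisimilar (h : SFA At Act X) (k : SFA At Act Y) (x : X) (y : Y) : Prop :=
  ∃ R, IsSFBisim h k R ∧ R x y

/-- Restriction `b·L` of a trace language to traces starting with an atom satisfying `b`. -/
def guardL (b : At → Bool) (L : Set (List (At × Act))) : Set (List (At × Act)) :=
  {w | w ∈ L ∧ ∃ (α : At) (p : Act) (t : List (At × Act)), w = (α, p) :: t ∧ b α = true}

/-- Elementwise concatenation of trace languages. -/
def catL (L K : Set (List (At × Act))) : Set (List (At × Act)) :=
  {w | ∃ u v, u ∈ L ∧ v ∈ K ∧ w = u ++ v}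

/-- Iterated concatenation: `L⁰ = {ε}`, `Lⁿ⁺¹ = L·Lⁿ`. -/
def powL (L : Set (List (At × Act))) : ℕ → Set (List (At × Act))
  | 0 => {[]}
  | n + 1 => catL L (powL L n)

section Aux

lemma accepts_nil {h : SFA At Act X} {x : X} : ¬ Accepts h x [] := fun a => by cases a

lemma accepts_ne_nil {h : SFA At Act X} {x : X} {w} (a : Accepts h x w) : w ≠ [] := by
  cases a <;> simp

lemma accepts_cons {h : SFA At Act X} {x : X} {α p w} :
    Accepts h x ((α, p) :: w) ↔
      (w = [] ∧ h x α = some (p, none)) ∨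
      ∃ x', h x α = some (p, some x') ∧ Accepts h x' w := by
  constructor
  · intro a
    cases a with
    | last hx => exact Or.inl ⟨rfl, hx⟩
    | step hx ha => exact Or.inr ⟨_, hx, ha⟩
  · rintro (⟨rfl, hx⟩ | ⟨x', hx, ha⟩)
    · exact .last hx
    · exact .step hx ha

lemma accepts_seq {e f : GExp At Act} {w} :
    Accepts (gderiv (At := At) (Act := Act)) (.seq e f) w ↔
      ∃ u v, Accepts gderiv e u ∧ Accepts gderiv f v ∧ w = u ++ v := by
  induction w generalizing e with
  | nil =>
    simp only [iff_false, accepts_nil, false_iff]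
    rintro ⟨u, v, hu, hv, huv⟩
    exact accepts_ne_nil hu (List.append_eq_nil_iff.mp huv.symm).1
  | cons ap w ih =>
    obtain ⟨α, p⟩ := ap
    rcases he : gderiv e α with _ | ⟨p', _ | e'⟩
    · rw [accepts_cons]
      simp only [gderiv, he]
      constructor
      · rintro (⟨_, h⟩ | ⟨_, h, _⟩) <;> simp at h
      · rintro ⟨u, v, hu, hv, huv⟩
        rcases u with _ | ⟨⟨β, q⟩, u'⟩
        · exact absurd rfl (accepts_ne_nil hu)
        · rw [List.cons_append] at huv
          injection huv with h1 h2
          injection h1 with h3 h4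
          subst h3; subst h4
          rcases accepts_cons.mp hu with ⟨_, h⟩ | ⟨_, h, _⟩ <;> rw [he] at h <;> simp at h
    · rw [accepts_cons]
      simp only [gderiv, he]
      constructor
      · rintro (⟨_, h⟩ | ⟨x', h, ha⟩)
        · simp at h
        · simp only [Option.some.injEq, Prod.mk.injEq] at h
          obtain ⟨rfl, rfl⟩ := h
          exact ⟨[(α, p')], w, .last he, ha, rfl⟩
      · rintro ⟨u, v, hu, hv, huv⟩
        rcases u with _ | ⟨⟨β, q⟩, u'⟩
        · exact absurd rfl (accepts_ne_nil hu)
        · rw [List.cons_append] at huv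
          injection huv with h1 h2
          injection h1 with h3 h4
          subst h3; subst h4; subst h2
          rcases accepts_cons.mp hu with ⟨rfl, h⟩ | ⟨x', h, ha⟩
          · rw [he] at h
            simp only [Option.some.injEq, Prod.mk.injEq] at h
            exact Or.inr ⟨f, by rw [h.1], hv⟩
          · rw [he] at h; simp at h
    · rw [accepts_cons]
      simp only [gderiv, he]
      constructor
      · rintro (⟨_, h⟩ | ⟨x', h, ha⟩)
        · simp at h
        · simp only [Option.some.injEq, Prod.mk.injEq] at h
          obtain ⟨rfl, rfl⟩ := h
          obtain ⟨u', v, hu', hv, rfl⟩ := ih.mp ha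
          exact ⟨(α, p') :: u', v, .step he hu', hv, rfl⟩
      · rintro ⟨u, v, hu, hv, huv⟩
        rcases u with _ | ⟨⟨β, q⟩, u'⟩
        · exact absurd rfl (accepts_ne_nil hu)
        · rw [List.cons_append] at huv
          injection huv with h1 h2
          injection h1 with h3 h4
          subst h3; subst h4; subst h2
          rcases accepts_cons.mp hu with ⟨rfl, h⟩ | ⟨x', h, ha⟩
          · rw [he] at h; simp at h
          · rw [he] at h
            simp only [Option.some.injEq, Prod.mk.injEq] at h
            obtain ⟨rfl, rfl⟩ := h
            exact Or.inr ⟨_, rfl, ih.mpr ⟨u', v, ha, hv, rfl⟩⟩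

lemma accepts_loop_step {b : At → Bool} {e f : GExp At Act} {w} :
    Accepts (gderiv (At := At) (Act := Act)) (.loop b e f) w ↔
      (∃ u v, u ∈ guardL b (Lang gderiv e) ∧ Accepts gderiv (.loop b e f) v ∧ w = u ++ v)
      ∨ w ∈ guardL (fun α => !b α) (Lang gderiv f) := by
  rcases w with _ | ⟨⟨α, p⟩, w⟩
  · simp only [accepts_nil, false_iff]
    rintro (⟨u, v, ⟨_, β, q, t, rfl, _⟩, _, huv⟩ | ⟨_, β, q, t, h, _⟩)
    · simp at huv
    · simp at h
  · by_cases hb : b α = true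
    · rcases he : gderiv e α with _ | ⟨p', _ | e'⟩
      · rw [accepts_cons]
        simp only [gderiv, hb, if_true, he]
        constructor
        · rintro (⟨_, h⟩ | ⟨_, h, _⟩) <;> simp at h
        · rintro (⟨u, v, ⟨hu, β, q, t, rfl, hβ⟩, _, huv⟩ | ⟨hf, β, q, t, ht, hβ⟩)
          · rw [List.cons_append] at huv
            injection huv with h1 h2
            injection h1 with h3 h4
            subst h3; subst h4
            rcases accepts_cons.mp hu with ⟨_, h⟩ | ⟨_, h, _⟩ <;> rw [he] at h <;> simp at h
          · injection ht with h1 h2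
            injection h1 with h3 h4
            subst h3; subst h4
            simp [hb] at hβ
      · rw [accepts_cons]
        simp only [gderiv, hb, if_true, he]
        constructor
        · rintro (⟨_, h⟩ | ⟨x', h, ha⟩)
          · simp at h
          · simp only [Option.some.injEq, Prod.mk.injEq] at h
            obtain ⟨rfl, rfl⟩ := h
            exact Or.inl ⟨[(α, p')], w, ⟨.last he, α, p', [], rfl, hb⟩, ha, rfl⟩
        · rintro (⟨u, v, ⟨hu, β, q, t, rfl, hβ⟩, hv, huv⟩ | ⟨hf, β, q, t, ht, hβ⟩)
          · rw [List.cons_append] at huv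
            injection huv with h1 h2
            injection h1 with h3 h4
            subst h3; subst h4; subst h2
            rcases accepts_cons.mp hu with ⟨rfl, h⟩ | ⟨x', h, _⟩ <;> rw [he] at h
            · simp only [Option.some.injEq, Prod.mk.injEq] at h
              exact Or.inr ⟨_, by rw [h.1], hv⟩
            · simp at h
          · injection ht with h1 h2
            injection h1 with h3 h4
            subst h3; subst h4
            simp [hb] at hβ
      · rw [accepts_cons]
        simp only [gderiv, hb, if_true, he]
        constructor
        · rintro (⟨_, h⟩ | ⟨x', h, ha⟩)
          · simp at h
          · simp only [Option.some.injEq, Prod.mk.injEq] at h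
            obtain ⟨rfl, rfl⟩ := h
            obtain ⟨u', v, hu', hv, rfl⟩ := accepts_seq.mp ha
            exact Or.inl ⟨(α, p') :: u', v, ⟨Accepts.step he hu', α, p', u', rfl, hb⟩, hv, rfl⟩
        · rintro (⟨u, v, ⟨hu, β, q, t, rfl, hβ⟩, hv, huv⟩ | ⟨hf, β, q, t, ht, hβ⟩)
          · rw [List.cons_append] at huv
            injection huv with h1 h2
            injection h1 with h3 h4
            subst h3; subst h4; subst h2
            rcases accepts_cons.mp hu with ⟨rfl, h⟩ | ⟨x', h, ha⟩ <;> rw [he] at h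
            · simp at h
            · simp only [Option.some.injEq, Prod.mk.injEq] at h
              obtain ⟨rfl, rfl⟩ := h
              exact Or.inr ⟨_, rfl, accepts_seq.mpr ⟨t, v, ha, hv, rfl⟩⟩
          · injection ht with h1 h2
            injection h1 with h3 h4
            subst h3; subst h4
            simp [hb] at hβ
    · have hder : gderiv (GExp.loop b e f) α = gderiv f α := by simp [gderiv, hb]
      rw [accepts_cons, hder, ← accepts_cons]
      constructor
      · intro ha
        exact Or.inr ⟨ha, α, p, w, rfl, by simp [hb]⟩
      · rintro (⟨u, v, ⟨hu, β, q, t, rfl, hβ⟩, _, huv⟩ | ⟨hf, _⟩)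
        · rw [List.cons_append] at huv
          injection huv with h1 h2
          injection h1 with h3 h4
          subst h3; subst h4
          exact absurd hβ hb
        · exact hf

lemma accepts_loop {b : At → Bool} {e f : GExp At Act} {w} :
    Accepts (gderiv (At := At) (Act := Act)) (.loop b e f) w ↔
      ∃ n, w ∈ catL (powL (guardL b (Lang gderiv e)) n)
          (guardL (fun α => !b α) (Lang gderiv f)) := by
  constructor
  · suffices H : ∀ n (w : List (At × Act)), w.length ≤ n →
        Accepts (gderiv (At := At) (Act := Act)) (.loop b e f) w →
        ∃ n', w ∈ catL (powL (guardL b (Lang gderiv e)) n')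
          (guardL (fun α => !b α) (Lang gderiv f)) from H w.length w le_rfl
    intro n
    induction n with
    | zero =>
      intro w hw ha
      rcases w with _ | _
      · exact absurd ha accepts_nil
      · simp at hw
    | succ n ih =>
      intro w hw ha
      rcases accepts_loop_step.mp ha with ⟨u, v, hu, hv, rfl⟩ | hf
      · obtain ⟨_, β, q, t, rfl, _⟩ := id hu
        have hlen : v.length ≤ n := by
          simp at hw; omega
        obtain ⟨n', x, y, hx, hy, rfl⟩ := ih v hlen hv
        exact ⟨n' + 1, _, y, ⟨_, x, hu, hx, rfl⟩, hy, by simp⟩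
      · exact ⟨0, [], w, rfl, hf, rfl⟩
  · rintro ⟨n, hn⟩
    induction n generalizing w with
    | zero =>
      obtain ⟨u, v, hu, hv, rfl⟩ := hn
      obtain rfl : u = [] := hu
      exact accepts_loop_step.mpr (Or.inr hv)
    | succ n ih =>
      obtain ⟨x, y, ⟨u, x', hu, hx', rfl⟩, hy, rfl⟩ := hn
      exact accepts_loop_step.mpr
        (Or.inl ⟨u, x' ++ y, hu, ih ⟨x', y, hx', hy, rfl⟩, by simp⟩)

end Aux

/-- the inductive characterization of the language of a skip-free GKAT
expression. -/
theorem lang_characterization :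
    (Lang (gderiv (At := At) (Act := Act)) .zero = ∅) ∧
    (∀ p : Act, Lang (gderiv (At := At)) (.act p) =
      {w | ∃ α : At, w = [(α, p)]}) ∧
    (∀ (b : At → Bool) (e₁ e₂ : GExp At Act),
      Lang gderiv (.add b e₁ e₂) =
        guardL b (Lang gderiv e₁) ∪ guardL (fun α => !b α) (Lang gderiv e₂)) ∧
    (∀ e₁ e₂ : GExp At Act,
      Lang gderiv (.seq e₁ e₂) = catL (Lang gderiv e₁) (Lang gderiv e₂)) ∧
    (∀ (b : At → Bool) (e₁ e₂ : GExp At Act),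
      Lang gderiv (.loop b e₁ e₂) =
        ⋃ n : ℕ, catL (powL (guardL b (Lang gderiv e₁)) n)
          (guardL (fun α => !b α) (Lang gderiv e₂))) := by
  refine ⟨?_, ?_, ?_, ?_, ?_⟩
  · ext w
    simp only [Lang, Set.mem_setOf_eq, Set.mem_empty_iff_false, iff_false]
    intro ha
    rcases w with _ | ⟨⟨α, p⟩, w⟩
    · exact accepts_nil ha
    · rcases accepts_cons.mp ha with ⟨_, h⟩ | ⟨_, h, _⟩ <;> simp [gderiv] at h
  · intro p
    ext w
    simp only [Lang, Set.mem_setOf_eq]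
    constructor
    · intro ha
      rcases w with _ | ⟨⟨α, q⟩, w⟩
      · exact absurd ha accepts_nil
      · rcases accepts_cons.mp ha with ⟨rfl, h⟩ | ⟨_, h, _⟩ <;>
          simp only [gderiv, Option.some.injEq, Prod.mk.injEq] at h
        · exact ⟨α, by rw [h.1]⟩
        · exact absurd h.2 (by simp)
    · rintro ⟨α, rfl⟩
      exact .last rfl
  · intro b e₁ e₂
    ext w
    simp only [Lang, Set.mem_setOf_eq, Set.mem_union]
    rcases w with _ | ⟨⟨α, p⟩, w⟩
    · simp only [accepts_nil, false_iff]
      rintro (⟨_, β, q, t, h, _⟩ | ⟨_, β, q, t, h, _⟩) <;> simp at h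
    · by_cases hb : b α = true
      · have hder : gderiv (GExp.add b e₁ e₂) α = gderiv e₁ α := by simp [gderiv, hb]
        rw [accepts_cons, hder, ← accepts_cons]
        constructor
        · intro ha
          exact Or.inl ⟨ha, α, p, w, rfl, hb⟩
        · rintro (⟨h, _⟩ | ⟨_, β, q, t, ht, hβ⟩)
          · exact h
          · injection ht with h1 h2
            injection h1 with h3 h4
            subst h3; subst h4
            simp [hb] at hβ
      · have hder : gderiv (GExp.add b e₁ e₂) α = gderiv e₂ α := by simp [gderiv, hb]
        rw [accepts_cons, hder, ← accepts_cons]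
        constructor
        · intro ha
          exact Or.inr ⟨ha, α, p, w, rfl, by simp [hb]⟩
        · rintro (⟨_, β, q, t, ht, hβ⟩ | ⟨h, _⟩)
          · injection ht with h1 h2
            injection h1 with h3 h4
            subst h3; subst h4
            exact absurd hβ hb
          · exact h
  · intro e₁ e₂
    ext w
    exact accepts_seq
  · intro b e₁ e₂
    ext w
    simp only [Lang, Set.mem_setOf_eq, Set.mem_iUnion]
    exact accepts_loop
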